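/- Let T be an infinite rooted tree, ψ : T → ℂ, m ≠ n natural numbers. If M_ψ : L^(m) → L^(n) is bounded, then μ_{ψ,m,n} = sup_{v≠o} |ψ'(v)|·ℓ_m(|v|)·Λ_n(|v|) is finite; more precisely μ_{ψ,m,n} ≤ (‖M_ψ‖ + ν_{ψ,m,n})·‖g‖_m, where g(v) = ℓ_m(|v|) for v ≠ o, g(o) = 0, and ν_{ψ,m,n} = sup_{v≠o} |ψ(v⁻)|Λ_n(|v|)/Λ_m(|v|). -/

import Mathlib

open Real Filter

/-- Iterated logarithm: ℓ₀(x) = x, ℓ_{j+1}(x) = 1 + log ℓ_j(x). -/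
noncomputable def ell : ℕ → ℝ → ℝ
  | 0, x => x
  | j + 1, x => 1 + Real.log (ell j x)

/-- Λ_k(x) = ∏_{j=0}^{k-1} ℓ_j(x). -/
noncomputable def Lam (k : ℕ) (x : ℝ) : ℝ := ∏ j ∈ Finset.range k, ell j x


lemma one_le_ell : ∀ (j : ℕ) {x : ℝ}, 1 ≤ x → 1 ≤ ell j x
  | 0, _, hx => hx
  | j + 1, x, hx => by
    have h := one_le_ell j hx
    simp only [ell]
    nlinarith [Real.log_nonneg h]

lemma ell_mono : ∀ (j : ℕ) {x y : ℝ}, 1 ≤ y → y ≤ x → ell j y ≤ ell j x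
  | 0, _, _, _, hxy => hxy
  | j + 1, x, y, hy, hxy => by
    have h := ell_mono j hy hxy
    have h1 := one_le_ell j hy
    simp only [ell]
    have := Real.log_le_log (by linarith) h
    linarith

lemma one_le_Lam (k : ℕ) {x : ℝ} (hx : 1 ≤ x) : 1 ≤ Lam k x := by
  induction k with
  | zero => simp [Lam]
  | succ k ih =>
    rw [Lam, Finset.prod_range_succ, ← Lam]
    nlinarith [one_le_ell k hx]

lemma ell_sub_le : ∀ (j : ℕ) {x y : ℝ}, 1 ≤ y → y ≤ x →
    ell j x - ell j y ≤ (x - y) / Lam j y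
  | 0, x, y, _, _ => by simp [ell, Lam]
  | j + 1, x, y, hy, hxy => by
    have hb := one_le_ell j hy
    have ha := ell_mono j hy hxy
    have hih := ell_sub_le j hy hxy
    have hΛ : 1 ≤ Lam j y := one_le_Lam j hy
    have hbpos : (0:ℝ) < ell j y := by linarith
    simp only [ell]
    have hlog : Real.log (ell j x) - Real.log (ell j y) ≤ (ell j x - ell j y) / ell j y := by
      rw [← Real.log_div (by linarith) (by linarith)]
      have := Real.log_le_sub_one_of_pos (div_pos (show (0:ℝ) < ell j x by linarith) hbpos)
      calc Real.log (ell j x / ell j y) ≤ ell j x / ell j y - 1 := this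
        _ = (ell j x - ell j y) / ell j y := by field_simp
    have hL : Lam (j+1) y = Lam j y * ell j y := Finset.prod_range_succ _ _
    calc 1 + Real.log (ell j x) - (1 + Real.log (ell j y))
        ≤ (ell j x - ell j y) / ell j y := by linarith
      _ ≤ ((x - y) / Lam j y) / ell j y := by gcongr
      _ = (x - y) / Lam (j+1) y := by rw [hL, div_div]

lemma ell_succ_le (j : ℕ) {y : ℝ} (hy : 1 ≤ y) : ell j (y + 1) ≤ 2 * ell j y := by
  have h := ell_sub_le j hy (by linarith : y ≤ y + 1)
  have hΛ : 1 ≤ Lam j y := one_le_Lam j hy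
  have h1 := one_le_ell j hy
  have : (y + 1 - y) / Lam j y ≤ 1 := by
    rw [show y + 1 - y = 1 by ring]
    exact div_le_one_of_le₀ hΛ (by linarith)
  linarith

lemma Lam_succ_le (k : ℕ) {y : ℝ} (hy : 1 ≤ y) : Lam k (y + 1) ≤ 2 ^ k * Lam k y := by
  rw [Lam, Lam, show (2:ℝ) ^ k = ∏ _j ∈ Finset.range k, (2:ℝ) by simp, ← Finset.prod_mul_distrib]
  apply Finset.prod_le_prod
  · intro j _; linarith [one_le_ell j (by linarith : (1:ℝ) ≤ y + 1)]
  · intro j _; exact ell_succ_le j hy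

lemma ell_one (j : ℕ) : ell j 1 = 1 := by
  induction j with
  | zero => rfl
  | succ j ih => simp [ell, ih]

lemma Lam_one (k : ℕ) : Lam k 1 = 1 := by
  simp [Lam, ell_one]

lemma der_bound (m : ℕ) {y : ℝ} (hy : 1 ≤ y) :
    (ell m (y + 1) - ell m y) * Lam m (y + 1) ≤ 2 ^ m := by
  have h1 := ell_sub_le m hy (by linarith : y ≤ y + 1)
  have h2 := Lam_succ_le m hy
  have hΛ : 1 ≤ Lam m y := one_le_Lam m hy
  have hΛ' : (0:ℝ) ≤ Lam m (y + 1) := le_trans zero_le_one (one_le_Lam m (by linarith))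
  have hmono : 0 ≤ ell m (y+1) - ell m y := by linarith [ell_mono m hy (by linarith : y ≤ y + 1)]
  calc (ell m (y + 1) - ell m y) * Lam m (y + 1)
      ≤ ((y + 1 - y) / Lam m y) * (2 ^ m * Lam m y) := by
        apply mul_le_mul h1 h2 hΛ' (div_nonneg (by linarith) (by linarith))
  _ = 2 ^ m := by field_simp; ring

/-- Discrete derivative of f on a rooted tree given by a parent map:
`f v - f (parent v)` (automatically 0 at the root since `parent o = o`). -/
def Der {V : Type*} (parent : V → V) (f : V → ℂ) (v : V) : ℂ := f v - f (parent v)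

/-- The set of values |f'(v)|·Λ_k(|v|) over v ≠ o; f ∈ L^(k) iff this set is bounded above. -/
def lipSet {V : Type*} (o : V) (parent : V → V) (depth : V → ℕ) (k : ℕ) (f : V → ℂ) : Set ℝ :=
  {r | ∃ v, v ≠ o ∧ r = ‖Der parent f v‖ * Lam k (depth v)}

/-- ‖f‖_k = |f(o)| + sup_{v ≠ o} |f'(v)|·Λ_k(|v|). -/
noncomputable def lipNorm {V : Type*} (o : V) (parent : V → V) (depth : V → ℕ) (k : ℕ)
    (f : V → ℂ) : ℝ :=
  ‖f o‖ + sSup (lipSet o parent depth k f)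

/-- If M_ψ : L^(m) → L^(n) is bounded (with bound C) and ν_{ψ,m,n} is finite, then
μ_{ψ,m,n} is finite with μ_{ψ,m,n} ≤ (C + ν_{ψ,m,n})·‖g‖_m, where g = ℓ_m(|·|). -/
theorem mu_finite_of_bounded {V : Type*} [DecidableEq V] (o : V) (parent : V → V)
    (depth : V → ℕ)
    (hpar : parent o = o) (hdepth0 : depth o = 0)
    (hdepth : ∀ v, v ≠ o → depth v = depth (parent v) + 1)
    (hchild : ∀ v, ∃ w, w ≠ o ∧ parent w = v)
    (ψ : V → ℂ) (m n : ℕ) (hmn : m ≠ n) (C : ℝ)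
    (hbdd : ∀ f : V → ℂ, BddAbove (lipSet o parent depth m f) →
      BddAbove (lipSet o parent depth n (fun v => ψ v * f v)) ∧
      lipNorm o parent depth n (fun v => ψ v * f v) ≤ C * lipNorm o parent depth m f)
    (hν : BddAbove {r : ℝ | ∃ v, v ≠ o ∧
      r = ‖ψ (parent v)‖ * Lam n (depth v) / Lam m (depth v)}) :
    BddAbove {r : ℝ | ∃ v, v ≠ o ∧
      r = ‖Der parent ψ v‖ * ell m (depth v) * Lam n (depth v)} ∧
    sSup {r : ℝ | ∃ v, v ≠ o ∧
      r = ‖Der parent ψ v‖ * ell m (depth v) * Lam n (depth v)} ≤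
      (C + sSup {r : ℝ | ∃ v, v ≠ o ∧
          r = ‖ψ (parent v)‖ * Lam n (depth v) / Lam m (depth v)}) *
        lipNorm o parent depth m (fun v => if v = o then 0 else ell m (depth v)) := by
  set g : V → ℂ := fun v => if v = o then 0 else (ell m (depth v) : ℂ) with hgdef
  have hd1 : ∀ v, v ≠ o → 1 ≤ ((depth v : ℕ) : ℝ) := by
    intro v hv
    have h := hdepth v hv
    have h1 : 1 ≤ depth v := by omega
    exact_mod_cast h1
  have hgo : g o = 0 := by simp [hgdef]
  have h2m : (1:ℝ) ≤ 2 ^ m := one_le_pow₀ (by norm_num)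
  have hgBdd : BddAbove (lipSet o parent depth m g) := by
    refine ⟨2 ^ m, ?_⟩
    rintro r ⟨v, hv, rfl⟩
    have hdv := hdepth v hv
    by_cases hp : parent v = o
    · have hd : depth v = 1 := by rw [hdv, hp, hdepth0]
      have hD : Der parent g v = ((ell m 1 : ℝ) : ℂ) := by
        simp [Der, hgdef, hv, hp, hd]
      rw [hD, hd]
      simpa [ell_one, Lam_one] using h2m
    · have hp1 : 1 ≤ ((depth (parent v) : ℕ) : ℝ) := hd1 _ hp
      set y : ℝ := ((depth (parent v) : ℕ) : ℝ) with hy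
      have hdv' : ((depth v : ℕ) : ℝ) = y + 1 := by rw [hdv]; push_cast; ring
      have hD : Der parent g v = ((ell m (y + 1) - ell m y : ℝ) : ℂ) := by
        simp only [Der, hgdef, if_neg hv, if_neg hp, hdv', ← hy]
        push_cast
        ring
      rw [hD, hdv', Complex.norm_real,
        Real.norm_of_nonneg (by linarith [ell_mono m hp1 (by linarith : y ≤ y + 1)])]
      exact der_bound m hp1
  obtain ⟨hB, hN⟩ := hbdd g hgBdd
  obtain ⟨w0, hw0, -⟩ := hchild o
  set ν := sSup {r : ℝ | ∃ v, v ≠ o ∧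
      r = ‖ψ (parent v)‖ * Lam n (depth v) / Lam m (depth v)} with hνdef
  set L := lipNorm o parent depth m g with hLdef
  have hLeq : L = sSup (lipSet o parent depth m g) := by
    rw [hLdef, lipNorm, hgo]; simp
  have hmemL : ∀ v, v ≠ o → ‖Der parent g v‖ * Lam m (depth v) ≤ L := by
    intro v hv
    rw [hLeq]
    exact le_csSup hgBdd ⟨v, hv, rfl⟩
  have hL0 : 0 ≤ L := by
    refine le_trans ?_ (hmemL w0 hw0)
    have := one_le_Lam m (hd1 w0 hw0)
    positivity
  have hν0 : 0 ≤ ν := by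
    refine le_trans ?_ (le_csSup hν ⟨w0, hw0, rfl⟩)
    have h1 : (1:ℝ) ≤ Lam m (depth w0) := one_le_Lam m (hd1 w0 hw0)
    have h2 : (1:ℝ) ≤ Lam n (depth w0) := one_le_Lam n (hd1 w0 hw0)
    positivity
  have hνmem : ∀ v, v ≠ o →
      ‖ψ (parent v)‖ * Lam n (depth v) / Lam m (depth v) ≤ ν :=
    fun v hv => le_csSup hν ⟨v, hv, rfl⟩
  have hSn : ∀ v, v ≠ o →
      ‖Der parent (fun x => ψ x * g x) v‖ * Lam n (depth v) ≤ C * L := by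
    intro v hv
    have h1 : ‖Der parent (fun x => ψ x * g x) v‖ * Lam n (depth v)
        ≤ sSup (lipSet o parent depth n (fun x => ψ x * g x)) := le_csSup hB ⟨v, hv, rfl⟩
    have h2 : sSup (lipSet o parent depth n (fun x => ψ x * g x))
        ≤ lipNorm o parent depth n (fun x => ψ x * g x) := by
      rw [lipNorm]
      exact le_add_of_nonneg_left (by positivity)
    linarith [hN]
  have hkey : ∀ v, v ≠ o →
      ‖Der parent ψ v‖ * ell m (depth v) * Lam n (depth v) ≤ C * L + ν * L := by
    intro v hv
    have hd := hd1 v hv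
    have hΛm : (1:ℝ) ≤ Lam m (depth v) := one_le_Lam m hd
    have hΛn : (1:ℝ) ≤ Lam n (depth v) := one_le_Lam n hd
    have hellm : (1:ℝ) ≤ ell m (depth v) := one_le_ell m hd
    have hprod : Der parent ψ v * g v
        = Der parent (fun x => ψ x * g x) v - ψ (parent v) * Der parent g v := by
      simp only [Der]
      ring
    have hgv : ‖g v‖ = ell m (depth v) := by
      rw [hgdef]
      simp only [if_neg hv]
      rw [Complex.norm_real, Real.norm_of_nonneg (by linarith : (0:ℝ) ≤ ell m (depth v))]
    have step1 : ‖Der parent ψ v‖ * ell m (depth v)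
        ≤ ‖Der parent (fun x => ψ x * g x) v‖
          + ‖ψ (parent v)‖ * ‖Der parent g v‖ := by
      calc ‖Der parent ψ v‖ * ell m (depth v)
          = ‖Der parent ψ v * g v‖ := by rw [norm_mul, hgv]
        _ = ‖Der parent (fun x => ψ x * g x) v - ψ (parent v) * Der parent g v‖ := by
            rw [hprod]
        _ ≤ ‖Der parent (fun x => ψ x * g x) v‖
              + ‖ψ (parent v) * Der parent g v‖ :=
            norm_sub_le _ _
        _ = _ := by rw [norm_mul]
    have step2 : ‖Der parent ψ v‖ * ell m (depth v) * Lam n (depth v)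
        ≤ ‖Der parent (fun x => ψ x * g x) v‖ * Lam n (depth v)
          + ‖ψ (parent v)‖ * ‖Der parent g v‖ * Lam n (depth v) := by
      have h := mul_le_mul_of_nonneg_right step1 (show (0:ℝ) ≤ Lam n (depth v) by linarith)
      rw [add_mul] at h
      exact h
    have hterm2 : ‖ψ (parent v)‖ * ‖Der parent g v‖ * Lam n (depth v)
        ≤ ν * L := by
      have hid : ‖ψ (parent v)‖ * ‖Der parent g v‖ * Lam n (depth v)
          = (‖ψ (parent v)‖ * Lam n (depth v) / Lam m (depth v))
            * (‖Der parent g v‖ * Lam m (depth v)) := by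
        field_simp
      rw [hid]
      exact mul_le_mul (hνmem v hv) (hmemL v hv)
        (mul_nonneg (by positivity) (by linarith)) hν0
    linarith [hSn v hv]
  refine ⟨⟨C * L + ν * L, ?_⟩, ?_⟩
  · rintro r ⟨v, hv, rfl⟩
    exact hkey v hv
  · refine csSup_le ⟨_, w0, hw0, rfl⟩ ?_
    rintro r ⟨v, hv, rfl⟩
    calc ‖Der parent ψ v‖ * ell m (depth v) * Lam n (depth v)
        ≤ C * L + ν * L := hkey v hv
      _ = (C + ν) * L := by ring
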